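/- Let S, Ŝ, W be symmetric positive definite n×n real matrices satisfying c·Ŝ ≤ S ≤ C·Ŝ, d·W ≤ S ≤ D·W, and e·W ≤ Ŝ ≤ E·W (in the Loewner order) with positive constants c, C, d, D, e, E. For γ ≥ 0, define S_γ := (S⁻¹ + γW⁻¹)⁻¹ and Ŝ_γ := (Ŝ⁻¹ + γW⁻¹)⁻¹. Then every eigenvalue λ of the generalized eigenvalue problem S_γ x = λ Ŝ_γ x satisfies λ ≥ c/(1 + γ·c·E) + γ·d/(1 + γ·d). -/

import Mathlib

open Matrix

lemma symdot {n : ℕ} {A : Matrix (Fin n) (Fin n) ℝ} (hA : A.IsHermitian)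
    (u v : Fin n → ℝ) : u ⬝ᵥ A *ᵥ v = v ⬝ᵥ A *ᵥ u := by
  have hAT : Aᵀ = A := by
    have := hA.eq
    simpa [conjTranspose_eq_transpose_of_trivial] using this
  rw [dotProduct_mulVec, ← mulVec_transpose, dotProduct_comm, hAT]

lemma posdef_smul {n : ℕ} {A : Matrix (Fin n) (Fin n) ℝ} (hA : A.PosDef)
    {a : ℝ} (ha : 0 < a) : (a • A).PosDef := by
  refine Matrix.PosDef.of_dotProduct_mulVec_pos ?_ (fun x hx => ?_)
  · unfold Matrix.IsHermitian
    rw [conjTranspose_smul, hA.1]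
    simp
  · rw [smul_mulVec, dotProduct_smul, smul_eq_mul]
    have := hA.dotProduct_mulVec_pos hx
    simp only [star_trivial] at this ⊢
    positivity

lemma possemidef_smul {n : ℕ} {A : Matrix (Fin n) (Fin n) ℝ} (hA : A.PosDef)
    {a : ℝ} (ha : 0 ≤ a) : (a • A).PosSemidef := by
  refine Matrix.PosSemidef.of_dotProduct_mulVec_nonneg ?_ (fun x => ?_)
  · unfold Matrix.IsHermitian
    rw [conjTranspose_smul, hA.1]
    simp
  · rw [smul_mulVec, dotProduct_smul, smul_eq_mul]
    have := hA.posSemidef.dotProduct_mulVec_nonneg x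
    simp only [star_trivial] at this ⊢
    positivity

lemma pos_quad {n : ℕ} {A : Matrix (Fin n) (Fin n) ℝ} (hA : A.PosDef)
    {x : Fin n → ℝ} (hx : x ≠ 0) : 0 < x ⬝ᵥ A *ᵥ x := by
  simpa using hA.dotProduct_mulVec_pos hx

lemma nonneg_quad {n : ℕ} {A : Matrix (Fin n) (Fin n) ℝ} (hA : A.PosSemidef)
    (x : Fin n → ℝ) : 0 ≤ x ⬝ᵥ A *ᵥ x := by
  simpa using hA.dotProduct_mulVec_nonneg x

lemma invLoewner {n : ℕ} {A B : Matrix (Fin n) (Fin n) ℝ} (hA : A.PosDef) (hB : B.PosDef)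
    (h : ∀ z, z ⬝ᵥ A *ᵥ z ≤ z ⬝ᵥ B *ᵥ z) (x : Fin n → ℝ) :
    x ⬝ᵥ B⁻¹ *ᵥ x ≤ x ⬝ᵥ A⁻¹ *ᵥ x := by
  set u := B⁻¹ *ᵥ x with hu
  set v := A⁻¹ *ᵥ x with hv
  have hBu : B *ᵥ u = x := by
    rw [hu, mulVec_mulVec, mul_nonsing_inv _ (isUnit_iff_ne_zero.mpr hB.det_pos.ne'), one_mulVec]
  have hAv : A *ᵥ v = x := by
    rw [hv, mulVec_mulVec, mul_nonsing_inv _ (isUnit_iff_ne_zero.mpr hA.det_pos.ne'), one_mulVec]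
  have hsq : 0 ≤ (u - v) ⬝ᵥ A *ᵥ (u - v) := nonneg_quad hA.posSemidef _
  have hexp : (u - v) ⬝ᵥ A *ᵥ (u - v)
      = u ⬝ᵥ A *ᵥ u - 2 * (u ⬝ᵥ x) + x ⬝ᵥ A⁻¹ *ᵥ x := by
    have h1 : u ⬝ᵥ A *ᵥ v = u ⬝ᵥ x := by rw [hAv]
    have h2 : v ⬝ᵥ A *ᵥ u = u ⬝ᵥ x := by rw [symdot hA.1, hAv]
    have h3 : v ⬝ᵥ A *ᵥ v = x ⬝ᵥ A⁻¹ *ᵥ x := by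
      rw [show v ⬝ᵥ A *ᵥ v = v ⬝ᵥ x from by rw [hAv], dotProduct_comm]
    rw [mulVec_sub, dotProduct_sub, sub_dotProduct, sub_dotProduct, h1, h2, h3]
    ring
  have hux : u ⬝ᵥ x = u ⬝ᵥ B *ᵥ u := by rw [hBu]
  have hxu : x ⬝ᵥ B⁻¹ *ᵥ x = u ⬝ᵥ x := by rw [← hu, dotProduct_comm]
  have hAB := h u
  linarith [hexp ▸ hsq]

lemma inv_smul_eq {n : ℕ} {A : Matrix (Fin n) (Fin n) ℝ} (hA : A.PosDef)
    {a : ℝ} (ha : 0 < a) : (a • A)⁻¹ = a⁻¹ • A⁻¹ := by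
  apply inv_eq_right_inv
  rw [Matrix.smul_mul, Matrix.mul_smul, smul_smul, mul_inv_cancel₀ ha.ne',
    mul_nonsing_inv _ (isUnit_iff_ne_zero.mpr hA.det_pos.ne'), one_smul]

/-- Loewner order lower eigenvalue bound for the augmented Schur complement
approximation (Lemma 3.1, lower bound, first term). -/
theorem stmt_0 {n : ℕ} (S Shat W : Matrix (Fin n) (Fin n) ℝ)
    (hS : S.PosDef) (hShat : Shat.PosDef) (hW : W.PosDef)
    (c C d D e E : ℝ) (hc : 0 < c) (hC : 0 < C) (hd : 0 < d) (hD : 0 < D)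
    (he : 0 < e) (hE : 0 < E)
    (h1 : ∀ x : Fin n → ℝ, c * (x ⬝ᵥ Shat.mulVec x) ≤ x ⬝ᵥ S.mulVec x)
    (h2 : ∀ x : Fin n → ℝ, x ⬝ᵥ S.mulVec x ≤ C * (x ⬝ᵥ Shat.mulVec x))
    (h3 : ∀ x : Fin n → ℝ, d * (x ⬝ᵥ W.mulVec x) ≤ x ⬝ᵥ S.mulVec x)
    (h4 : ∀ x : Fin n → ℝ, x ⬝ᵥ S.mulVec x ≤ D * (x ⬝ᵥ W.mulVec x))
    (h5 : ∀ x : Fin n → ℝ, e * (x ⬝ᵥ W.mulVec x) ≤ x ⬝ᵥ Shat.mulVec x)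
    (h6 : ∀ x : Fin n → ℝ, x ⬝ᵥ Shat.mulVec x ≤ E * (x ⬝ᵥ W.mulVec x))
    (γ : ℝ) (hγ : 0 ≤ γ)
    (Sγ Shatγ : Matrix (Fin n) (Fin n) ℝ)
    (hSγ : Sγ = (S⁻¹ + γ • W⁻¹)⁻¹) (hShatγ : Shatγ = (Shat⁻¹ + γ • W⁻¹)⁻¹)
    (lam : ℝ) (x : Fin n → ℝ) (hx : x ≠ 0)
    (heig : Sγ.mulVec x = lam • Shatγ.mulVec x) :
    c / (1 + γ * c * E) + γ * d / (1 + γ * d) ≤ lam := by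
  set A := S⁻¹ + γ • W⁻¹ with hAdef
  set B := Shat⁻¹ + γ • W⁻¹ with hBdef
  have hA : A.PosDef := hS.inv.add_posSemidef (possemidef_smul hW.inv hγ)
  have hB : B.PosDef := hShat.inv.add_posSemidef (possemidef_smul hW.inv hγ)
  set y := Shatγ *ᵥ x with hy
  have hBy : B *ᵥ y = x := by
    rw [hy, hShatγ, mulVec_mulVec,
      mul_nonsing_inv _ (isUnit_iff_ne_zero.mpr hB.det_pos.ne'), one_mulVec]
  have hy0 : y ≠ 0 := by
    intro h0
    apply hx
    rw [← hBy, h0, mulVec_zero]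
  have hBA : B *ᵥ y = lam • (A *ᵥ y) := by
    have : A *ᵥ (Sγ *ᵥ x) = A *ᵥ (lam • (Shatγ *ᵥ x)) := by rw [heig]
    rw [hSγ, mulVec_mulVec, mul_nonsing_inv _ (isUnit_iff_ne_zero.mpr hA.det_pos.ne'),
      one_mulVec, mulVec_smul] at this
    rw [hBy, this, hy]
  -- quadratic forms
  set p := y ⬝ᵥ S⁻¹ *ᵥ y with hp
  set q := y ⬝ᵥ Shat⁻¹ *ᵥ y with hq
  set r := y ⬝ᵥ W⁻¹ *ᵥ y with hr
  have hqA : y ⬝ᵥ A *ᵥ y = p + γ * r := by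
    rw [hAdef, add_mulVec, dotProduct_add, smul_mulVec, dotProduct_smul, smul_eq_mul]
  have hqB : y ⬝ᵥ B *ᵥ y = q + γ * r := by
    rw [hBdef, add_mulVec, dotProduct_add, smul_mulVec, dotProduct_smul, smul_eq_mul]
  have heq : q + γ * r = lam * (p + γ * r) := by
    rw [← hqA, ← hqB, hBA, dotProduct_smul, smul_eq_mul]
  have hppos : 0 < p := pos_quad hS.inv hy0
  have hqpos : 0 < q := pos_quad hShat.inv hy0
  have hrpos : 0 < r := pos_quad hW.inv hy0
  -- p ≤ c⁻¹ * q
  have hpq : p ≤ c⁻¹ * q := by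
    have := invLoewner (posdef_smul hShat hc) hS
      (fun z => by
        rw [smul_mulVec, dotProduct_smul, smul_eq_mul]; exact h1 z) y
    rwa [inv_smul_eq hShat hc, smul_mulVec, dotProduct_smul, smul_eq_mul] at this
  -- r ≤ E * q
  have hrq : r ≤ E * q := by
    have := invLoewner hShat (posdef_smul hW hE)
      (fun z => by
        rw [smul_mulVec, dotProduct_smul, smul_eq_mul]; exact h6 z) y
    rw [inv_smul_eq hW hE, smul_mulVec, dotProduct_smul, smul_eq_mul] at this
    calc r = E * (E⁻¹ * r) := by field_simp
    _ ≤ E * q := by nlinarith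
  -- p ≤ d⁻¹ * r
  have hpr : p ≤ d⁻¹ * r := by
    have := invLoewner (posdef_smul hW hd) hS
      (fun z => by
        rw [smul_mulVec, dotProduct_smul, smul_eq_mul]; exact h3 z) y
    rwa [inv_smul_eq hW hd, smul_mulVec, dotProduct_smul, smul_eq_mul] at this
  have hden1 : 0 < 1 + γ * c * E := by positivity
  have hden2 : 0 < 1 + γ * d := by positivity
  have ht : 0 < p + γ * r := by positivity
  have key1 : c / (1 + γ * c * E) * (p + γ * r) ≤ q := by
    rw [div_mul_eq_mul_div, div_le_iff₀ hden1]
    have hcc : c * c⁻¹ = 1 := mul_inv_cancel₀ hc.ne'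
    nlinarith [mul_le_mul_of_nonneg_left hpq hc.le, mul_le_mul_of_nonneg_left hrq (mul_nonneg hγ hc.le)]
  have key2 : γ * d / (1 + γ * d) * (p + γ * r) ≤ γ * r := by
    rw [div_mul_eq_mul_div, div_le_iff₀ hden2]
    have hdd : d * d⁻¹ = 1 := mul_inv_cancel₀ hd.ne'
    nlinarith [mul_le_mul_of_nonneg_left hpr (mul_nonneg hγ hd.le)]
  have hsum : (c / (1 + γ * c * E) + γ * d / (1 + γ * d)) * (p + γ * r) ≤ lam * (p + γ * r) := by
    rw [add_mul, ← heq]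
    linarith
  exact le_of_mul_le_mul_right hsum ht
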